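/- Combined compression-rollout theorem: Let $z_{1:T}$ be a latent trajectory in $\mathbb{R}^d$ with total variation $V$, and let $F$ be closed-loop dynamics satisfying $\|F(s,z)-F(s',z')\| \le L_s\|s-s'\| + L_z\|z-z'\|$ with $L_s < 1$. Then for any $m \ge 2$ there exists a piecewise-constant latent sequence $\tilde z_{1:T}$ with at most $m$ segments such that the rollouts from a common initial state satisfy $\|\tilde s_t - s_t\| \le \frac{L_z V}{(m-1)(1 - L_s)}$ for all $t$. -/

import Mathlib

noncomputable def cumVar {d : ℕ} (z : ℕ → EuclideanSpace ℝ (Fin d)) (t : ℕ) : ℝ :=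
  ∑ u ∈ Finset.Icc 1 (t - 1), ‖z (u + 1) - z u‖

open Classical in
noncomputable def bp {d : ℕ} (z : ℕ → EuclideanSpace ℝ (Fin d)) (T : ℕ) (ε : ℝ) : ℕ → ℕ
  | 0 => 1
  | i + 1 =>
    if h : ∃ t, bp z T ε i < t ∧ t ≤ T ∧ cumVar z (bp z T ε i) + ε < cumVar z t then
      Nat.find h
    else T + 1

lemma cumVar_nonneg {d : ℕ} (z : ℕ → EuclideanSpace ℝ (Fin d)) (t : ℕ) :
    0 ≤ cumVar z t :=
  Finset.sum_nonneg fun _ _ => norm_nonneg _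

lemma cumVar_mono {d : ℕ} (z : ℕ → EuclideanSpace ℝ (Fin d)) {a t : ℕ} (h : a ≤ t) :
    cumVar z a ≤ cumVar z t := by
  apply Finset.sum_le_sum_of_subset_of_nonneg
  · exact Finset.Icc_subset_Icc_right (by omega)
  · intro _ _ _; exact norm_nonneg _

lemma norm_sub_le_cumVar {d : ℕ} (z : ℕ → EuclideanSpace ℝ (Fin d)) {a t : ℕ}
    (ha : 1 ≤ a) (hat : a ≤ t) : ‖z t - z a‖ ≤ cumVar z t - cumVar z a := by
  have key : ∀ t, a ≤ t → ‖z t - z a‖ ≤ ∑ u ∈ Finset.Icc a (t - 1), ‖z (u + 1) - z u‖ := by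
    intro t ht
    induction t with
    | zero => omega
    | succ t ih =>
      rcases Nat.lt_or_ge a (t + 1) with h | h
      · have ht' : a ≤ t := by omega
        have h1 : ‖z (t + 1) - z a‖ ≤ ‖z (t + 1) - z t‖ + ‖z t - z a‖ := by
          have := norm_add_le (z (t + 1) - z t) (z t - z a)
          simpa using this
        have h2 := ih ht'
        have hsum : ∑ u ∈ Finset.Icc a (t + 1 - 1), ‖z (u + 1) - z u‖
            = ∑ u ∈ Finset.Icc a (t - 1), ‖z (u + 1) - z u‖ + ‖z (t - 1 + 1 + 1) - z (t - 1 + 1)‖ := by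
          have : t + 1 - 1 = (t - 1) + 1 := by omega
          rw [this, Finset.sum_Icc_succ_top (by omega)]
        have ht1 : t - 1 + 1 = t := by omega
        rw [hsum, ht1]
        linarith
      · have : a = t + 1 := by omega
        subst this
        simp
  have h1 := key t hat
  have hsplit : cumVar z a + ∑ u ∈ Finset.Icc a (t - 1), ‖z (u + 1) - z u‖ = cumVar z t := by
    unfold cumVar
    have h1' : Finset.Icc 1 (a - 1) = Finset.Ioc 0 (a - 1) := by
      rw [← Finset.Icc_add_one_left_eq_Ioc]; rfl
    have h2' : Finset.Icc a (t - 1) = Finset.Ioc (a - 1) (t - 1) := by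
      rw [← Finset.Icc_add_one_left_eq_Ioc]; congr 1; omega
    have h3' : Finset.Icc 1 (t - 1) = Finset.Ioc 0 (t - 1) := by
      rw [← Finset.Icc_add_one_left_eq_Ioc]; rfl
    rw [h1', h2', h3']
    exact Finset.sum_Ioc_consecutive _ (by omega) (by omega)
  linarith

lemma bp_bounds {d : ℕ} (z : ℕ → EuclideanSpace ℝ (Fin d)) (T : ℕ) (ε : ℝ) (i : ℕ) :
    min (i + 1) (T + 1) ≤ bp z T ε i ∧ bp z T ε i ≤ T + 1 := by
  classical
  induction i with
  | zero => simp [bp]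
  | succ i ih =>
    rw [bp]
    split
    · next h =>
      have hf := Nat.find_spec h
      constructor
      · have : bp z T ε i < Nat.find h := hf.1
        omega
      · omega
    · omega

lemma bp_pos {d : ℕ} (z : ℕ → EuclideanSpace ℝ (Fin d)) (T : ℕ) (ε : ℝ) (i : ℕ) :
    1 ≤ bp z T ε i := by
  have := (bp_bounds z T ε i).1; omega

lemma bp_strict {d : ℕ} (z : ℕ → EuclideanSpace ℝ (Fin d)) (T : ℕ) (ε : ℝ) {i : ℕ}
    (h : bp z T ε i ≤ T) : bp z T ε i < bp z T ε (i + 1) := by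
  classical
  rw [bp]
  split
  · next hex => exact (Nat.find_spec hex).1
  · omega

lemma bp_overflow {d : ℕ} (z : ℕ → EuclideanSpace ℝ (Fin d)) (T : ℕ) (ε : ℝ) {i : ℕ}
    (h : bp z T ε (i + 1) ≠ T + 1) :
    cumVar z (bp z T ε i) + ε < cumVar z (bp z T ε (i + 1)) ∧ bp z T ε (i + 1) ≤ T := by
  classical
  rw [bp] at h ⊢
  by_cases hex : ∃ t, bp z T ε i < t ∧ t ≤ T ∧ cumVar z (bp z T ε i) + ε < cumVar z t
  · rw [dif_pos hex] at h ⊢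
    exact ⟨(Nat.find_spec hex).2.2, (Nat.find_spec hex).2.1⟩
  · rw [dif_neg hex] at h
    exact absurd rfl h

lemma bp_segment {d : ℕ} (z : ℕ → EuclideanSpace ℝ (Fin d)) (T : ℕ) {ε : ℝ} (hε : 0 ≤ ε)
    {i t : ℕ} (h1 : bp z T ε i ≤ t) (h2 : t < bp z T ε (i + 1)) (h3 : t ≤ T) :
    cumVar z t ≤ cumVar z (bp z T ε i) + ε := by
  classical
  rcases Nat.eq_or_lt_of_le h1 with h | h
  · rw [← h]; linarith
  rw [bp] at h2
  revert h2
  split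
  · next hex =>
    intro h2
    have := Nat.find_min hex h2
    push_neg at this
    exact this h h3
  · next hex =>
    intro _
    push_neg at hex
    exact hex t h h3
theorem compression_rollout_bound
    {n d : ℕ} (T : ℕ) (hT : 1 ≤ T)
    (z : ℕ → EuclideanSpace ℝ (Fin d)) (V : ℝ)
    (hV : V = ∑ t ∈ Finset.Icc 1 (T - 1), ‖z (t + 1) - z t‖)
    (F : EuclideanSpace ℝ (Fin n) → EuclideanSpace ℝ (Fin d) → EuclideanSpace ℝ (Fin n))
    (Ls Lz : ℝ) (hLs0 : 0 ≤ Ls) (hLs1 : Ls < 1) (hLz : 0 ≤ Lz)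
    (hLip : ∀ s s' : EuclideanSpace ℝ (Fin n), ∀ zc zc' : EuclideanSpace ℝ (Fin d),
      ‖F s zc - F s' zc'‖ ≤ Ls * ‖s - s'‖ + Lz * ‖zc - zc'‖)
    (m : ℕ) (hm : 2 ≤ m) :
    ∃ (k : ℕ) (b : ℕ → ℕ) (ztil : ℕ → EuclideanSpace ℝ (Fin d)),
      k ≤ m ∧
      b 0 = 1 ∧
      (∀ i < k, b i < b (i + 1)) ∧
      b k = T + 1 ∧
      (∀ i < k, ∀ t, b i ≤ t → t < b (i + 1) → ztil t = z (b i)) ∧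
      (∀ s stil : ℕ → EuclideanSpace ℝ (Fin n),
        s 1 = stil 1 →
        (∀ t, 1 ≤ t → s (t + 1) = F (s t) (z t)) →
        (∀ t, 1 ≤ t → stil (t + 1) = F (stil t) (ztil t)) →
        ∀ t, 1 ≤ t → t ≤ T →
          ‖stil t - s t‖ ≤ Lz * V / (((m : ℝ) - 1) * (1 - Ls))) := by
  classical
  have hm1 : (0:ℝ) < (m:ℝ) - 1 := by
    have : (2:ℝ) ≤ (m:ℝ) := by exact_mod_cast hm
    linarith
  have hV0 : 0 ≤ V := hV ▸ Finset.sum_nonneg fun _ _ => norm_nonneg _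
  set ε : ℝ := V / ((m:ℝ) - 1) with hεdef
  have hε0 : 0 ≤ ε := div_nonneg hV0 hm1.le
  have hVc : cumVar z T = V := by rw [hV]; rfl
  have hb0 : bp z T ε 0 = 1 := by simp [bp]
  have hkex : ∃ i, bp z T ε i = T + 1 := ⟨T, by have := bp_bounds z T ε T; omega⟩
  set k : ℕ := Nat.find hkex with hkdef
  have hbk : bp z T ε k = T + 1 := Nat.find_spec hkex
  have hblt : ∀ i < k, bp z T ε i ≤ T := by
    intro i hi
    have h1 : bp z T ε i ≠ T + 1 := Nat.find_min hkex hi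
    have := (bp_bounds z T ε i).2
    omega
  have hbstrict : ∀ i < k, bp z T ε i < bp z T ε (i + 1) :=
    fun i hi => bp_strict z T ε (hblt i hi)
  have hbmono : ∀ j ≤ k, ∀ i ≤ j, bp z T ε i ≤ bp z T ε j := by
    intro j
    induction j with
    | zero => intro _ i hi; simp [Nat.le_zero] at hi; rw [hi]
    | succ j ih =>
      intro hjk i hi
      rcases Nat.eq_or_lt_of_le hi with h | h
      · rw [h]
      · have h1 := ih (by omega) i (by omega)
        have h2 := hbstrict j (by omega)
        omega
  -- counting: k ≤ m
  have hcb : ∀ j, 1 ≤ j → j < k → (j:ℝ) * ε < cumVar z (bp z T ε j) := by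
    intro j hj hjk
    induction j with
    | zero => omega
    | succ j ih =>
      have hne : bp z T ε (j + 1) ≠ T + 1 := Nat.find_min hkex hjk
      have hov := bp_overflow z T ε hne
      rcases Nat.eq_zero_or_pos j with h0 | h0
      · subst h0
        have hc0 : cumVar z (bp z T ε 0) = 0 := by
          rw [hb0]; simp [cumVar]
        rw [hc0] at hov
        push_cast
        linarith [hov.1]
      · have hih := ih h0 (by omega)
        push_cast
        push_cast at hih
        linarith [hov.1]
  have hkm : k ≤ m := by
    by_contra hkm
    push_neg at hkm
    have h1 : ((m:ℝ)) * ε < cumVar z (bp z T ε m) := hcb m (by omega) (by omega)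
    have h2 : cumVar z (bp z T ε m) ≤ cumVar z T := cumVar_mono z (hblt m (by omega))
    rw [hVc] at h2
    have h3 : V = (m:ℝ) * ε - ε := by
      rw [hεdef]; field_simp
    linarith
  -- tilde z
  set idx : ℕ → ℕ := fun t => Nat.findGreatest (fun i => bp z T ε i ≤ t) k with hidxdef
  set ztil : ℕ → EuclideanSpace ℝ (Fin d) := fun t => z (bp z T ε (idx t)) with hztildef
  have hidx_spec : ∀ t, 1 ≤ t → t ≤ T →
      idx t < k ∧ bp z T ε (idx t) ≤ t ∧ t < bp z T ε (idx t + 1) := by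
    intro t ht htT
    have hsp : bp z T ε (idx t) ≤ t :=
      Nat.findGreatest_spec (P := fun i => bp z T ε i ≤ t) (Nat.zero_le k) (by show bp z T ε 0 ≤ t; rw [hb0]; exact ht)
    have hlek : idx t ≤ k := Nat.findGreatest_le k
    have hlt : idx t < k := by
      rcases Nat.eq_or_lt_of_le hlek with h | h
      · exfalso; rw [h, hbk] at hsp; omega
      · exact h
    refine ⟨hlt, hsp, ?_⟩
    by_contra hc
    push_neg at hc
    have h5 : idx t + 1 ≤ idx t :=
      Nat.le_findGreatest (P := fun i => bp z T ε i ≤ t) (by omega : idx t + 1 ≤ k) hc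
    omega
  have hztil_eq : ∀ i < k, ∀ t, bp z T ε i ≤ t → t < bp z T ε (i + 1) →
      ztil t = z (bp z T ε i) := by
    intro i hik t hbt htb
    have ht1 : 1 ≤ t := le_trans (bp_pos z T ε i) hbt
    have heq : idx t = i := by
      have hge : i ≤ idx t := Nat.le_findGreatest (P := fun j => bp z T ε j ≤ t) (le_of_lt hik) hbt
      have hle : idx t ≤ i := by
        by_contra hc
        push_neg at hc
        have hlek : idx t ≤ k := Nat.findGreatest_le k
        have hsp : bp z T ε (idx t) ≤ t :=
          Nat.findGreatest_spec (P := fun i => bp z T ε i ≤ t) (Nat.zero_le k) (by show bp z T ε 0 ≤ t; rw [hb0]; exact ht1)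
        have hmn := hbmono (idx t) hlek (i + 1) (by omega)
        omega
      omega
    show z (bp z T ε (idx t)) = z (bp z T ε i)
    rw [heq]
  have hz_close : ∀ t, 1 ≤ t → t ≤ T → ‖ztil t - z t‖ ≤ ε := by
    intro t ht htT
    obtain ⟨hlt, hbt, hnext⟩ := hidx_spec t ht htT
    have h1 : ‖z t - z (bp z T ε (idx t))‖ ≤ cumVar z t - cumVar z (bp z T ε (idx t)) :=
      norm_sub_le_cumVar z (bp_pos z T ε _) hbt
    have h2 : cumVar z t ≤ cumVar z (bp z T ε (idx t)) + ε :=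
      bp_segment z T hε0 hbt hnext htT
    have h3 : ‖ztil t - z t‖ = ‖z t - z (bp z T ε (idx t))‖ := by
      show ‖z (bp z T ε (idx t)) - z t‖ = _
      rw [norm_sub_rev]
    rw [h3]
    linarith
  refine ⟨k, bp z T ε, ztil, hkm, hb0, hbstrict, hbk, hztil_eq, ?_⟩
  intro s stil hinit hs hstil
  have hdenom : (0:ℝ) < 1 - Ls := by linarith
  have hB0 : 0 ≤ Lz * ε / (1 - Ls) := div_nonneg (mul_nonneg hLz hε0) hdenom.le
  have main : ∀ t, 1 ≤ t → t ≤ T → ‖stil t - s t‖ ≤ Lz * ε / (1 - Ls) := by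
    intro t
    induction t with
    | zero => omega
    | succ t ih =>
      intro _ htT
      rcases Nat.eq_zero_or_pos t with h0 | h0
      · subst h0
        rw [← hinit]
        simpa using hB0
      · have htT' : t ≤ T := by omega
        have e1 := ih h0 htT'
        rw [hs t h0, hstil t h0]
        have e2 := hLip (stil t) (s t) (ztil t) (z t)
        have e3 := hz_close t h0 htT'
        have e4 : Lz * ‖ztil t - z t‖ ≤ Lz * ε := mul_le_mul_of_nonneg_left e3 hLz
        have e5 : Ls * ‖stil t - s t‖ ≤ Ls * (Lz * ε / (1 - Ls)) :=
          mul_le_mul_of_nonneg_left e1 hLs0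
        have hkey : Ls * (Lz * ε / (1 - Ls)) + Lz * ε = Lz * ε / (1 - Ls) := by
          field_simp
          ring
        linarith
  intro t ht htT
  have h1 := main t ht htT
  have h2 : Lz * ε / (1 - Ls) = Lz * V / (((m:ℝ) - 1) * (1 - Ls)) := by
    rw [hεdef]
    field_simp
  linarith
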